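/- Let Z^{2l} = (i, f^{2l}) ∈ ℤ ≀ D_{2l} and let Z^{l} = (i, f^{l}) ∈ ℤ ≀ D_l be its image under the quotient map D_{2l} → D_l. If every lamp satisfies |f^{2l}(x)| ≤ l/2 in D_{2l}, then |Z^{2l}| = |Z^{l}|, where lengths are with respect to the corresponding switch-walk-switch generating sets (same parameter k). -/

import Mathlib

/-- The shift automorphism of the group of `L`-valued functions on `B`. -/
def shiftEquiv {B : Type*} [AddGroup B] {L : Type*} [Group L] (b : B) :
    (B → L) ≃* (B → L) where
  toFun f x := f (x - b)
  invFun f x := f (x + b)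
  left_inv f := by funext x; simp
  right_inv f := by funext x; simp
  map_mul' f g := rfl

/-- The shift action of `B` on `B → L`, as a homomorphism to automorphisms. -/
def shiftHom (B : Type*) [AddCommGroup B] (L : Type*) [Group L] :
    Multiplicative B →* MulAut (B → L) where
  toFun b := shiftEquiv (Multiplicative.toAdd b)
  map_one' := by ext f x; simp [shiftEquiv]
  map_mul' b c := by ext f x; simp [shiftEquiv, sub_sub]

/-- The (unrestricted) wreath product `L ≀ B`, containing the lamplighter group `B ≀ L`
of the paper as the subgroup generated by the marked generators. -/
abbrev Wr (B : Type*) [AddCommGroup B] (L : Type*) [Group L] :=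
  (B → L) ⋊[shiftHom B L] Multiplicative B

/-- The function equal to `v` at `g` and neutral elsewhere. -/
def delta {B : Type*} [DecidableEq B] {L : Type*} [Group L] (g : B) (v : L) : B → L :=
  fun x => if x = g then v else 1

/-- The marked generators `τ = (+1, 𝟙)`, `α = (0, a δ₀)`, `β = (0, b δ_k)` of
`Γ(k, l, m) = (ℤ/mℤ) ≀ D_l` (with `m = 0` meaning `ℤ`, and `l = 0` meaning `D_∞`). -/
def gammaGens (k l m : ℕ) : Fin 3 → Wr (ZMod m) (DihedralGroup l) :=
  ![⟨1, Multiplicative.ofAdd 1⟩,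
    ⟨delta 0 (DihedralGroup.sr 0), 1⟩,
    ⟨delta (k : ZMod m) (DihedralGroup.sr 1), 1⟩]



/-- Word length of `g` with respect to a set `S` of generators. -/
noncomputable def lengthWrt {G : Type*} [Group G] (S : Set G) (g : G) : ℕ :=
  sInf {n | ∃ L : List G, (∀ x ∈ L, x ∈ S) ∧ L.length = n ∧ L.prod = g}

/-- The power `g^ε` for `ε ∈ {0,1}`. -/
def pw {G : Type*} [Group G] (g : G) (b : Bool) : G := if b then g else 1

/-- The generator `τ = (+1, 𝟙)` of `ℤ ≀ D_l`. -/
def tauG (l : ℕ) : Wr ℤ (DihedralGroup l) := ⟨1, Multiplicative.ofAdd 1⟩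

/-- The generator `α = (0, a δ₀)` of `ℤ ≀ D_l`. -/
def alphaG (l : ℕ) : Wr ℤ (DihedralGroup l) := ⟨delta 0 (DihedralGroup.sr 0), 1⟩

/-- The generator `β = (0, b δ_k)` of `ℤ ≀ D_l`. -/
def betaG (k l : ℕ) : Wr ℤ (DihedralGroup l) := ⟨delta (k : ℤ) (DihedralGroup.sr 1), 1⟩

/-- The set of switches `u ∈ {α^ε β^ε', β^ε α^ε'}`. -/
def swsU (k l : ℕ) : Set (Wr ℤ (DihedralGroup l)) :=
  {u | ∃ ε ε' : Bool,
    u = pw (alphaG l) ε * pw (betaG k l) ε' ∨ u = pw (betaG k l) ε * pw (alphaG l) ε'}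

/-- The switch-walk-switch generating set: all `u₁ τ^{±1} u₂` with `u_i` switches. -/
def swsSet (k l : ℕ) : Set (Wr ℤ (DihedralGroup l)) :=
  {g | ∃ u₁ ∈ swsU k l, ∃ u₂ ∈ swsU k l,
    g = u₁ * tauG l * u₂ ∨ g = u₁ * (tauG l)⁻¹ * u₂}

/-- The generators `a = sr 0`, `b = sr 1` of the dihedral group. -/
def dihGens (l : ℕ) : Set (DihedralGroup l) := {DihedralGroup.sr 0, DihedralGroup.sr 1}


noncomputable section
namespace S16aux
open DihedralGroup List

/-- The generator labelled by a Bool: `true ↦ a = sr 0`, `false ↦ b = sr 1`. -/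
def gen (n : ℕ) (c : Bool) : DihedralGroup n := if c then sr 0 else sr 1

def gprod (n : ℕ) (w : List Bool) : DihedralGroup n := (w.map (gen n)).prod

lemma gen_mul_self (n : ℕ) (c : Bool) : gen n c * gen n c = 1 := by
  cases c <;> simp [gen, sr_mul_sr, ← one_def]

lemma gen_mem (n : ℕ) (c : Bool) : gen n c ∈ dihGens n := by
  cases c <;> simp [gen, dihGens]

lemma gprod_cons (n : ℕ) (c : Bool) (w : List Bool) :
    gprod n (c :: w) = gen n c * gprod n w := by simp [gprod]

lemma gprod_append (n : ℕ) (w₁ w₂ : List Bool) :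
    gprod n (w₁ ++ w₂) = gprod n w₁ * gprod n w₂ := by simp [gprod]

lemma gen_inv (n : ℕ) (c : Bool) : (gen n c)⁻¹ = gen n c :=
  inv_eq_of_mul_eq_one_right (gen_mul_self n c)

lemma gprod_reverse (n : ℕ) (w : List Bool) : gprod n w.reverse = (gprod n w)⁻¹ := by
  induction w with
  | nil => simp [gprod]
  | cons c w ih =>
      rw [List.reverse_cons, gprod_append, gprod_cons, ih]
      simp [gprod, gen_inv, mul_inv_rev, gen_inv]

/-- The alternating word of length `m` starting with `c`. -/
def altL : Bool → ℕ → List Bool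
  | _, 0 => []
  | c, (m+1) => c :: altL (!c) m

@[simp] lemma altL_length (c : Bool) (m : ℕ) : (altL c m).length = m := by
  induction m generalizing c with
  | zero => rfl
  | succ m ih => simp [altL, ih]

lemma altL_two (c : Bool) (m : ℕ) : altL c (m + 2) = c :: (!c) :: altL c m := by
  simp [altL, Bool.not_not]

lemma chain'_eq_altL : ∀ (w : List Bool), List.Chain' (· ≠ ·) w →
    w = altL (w.headD true) w.length
  | [], _ => rfl
  | [x], _ => by simp [altL]
  | (x :: y :: t), h => by
      simp only [List.Chain', List.isChain_cons_cons] at h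
      have hy : y = !x := by
        cases x <;> cases y <;> simp_all
      have ih := chain'_eq_altL (y :: t) h.2
      simp only [List.headD_cons] at ih ⊢
      rw [List.length_cons, altL, ← hy, ← ih]

lemma altL_sublist_same (c : Bool) : ∀ (m N : ℕ), m ≤ N → altL c m <+ altL c N := by
  intro m N h
  induction N generalizing m c with
  | zero => interval_cases m; simp [altL]
  | succ N ih =>
      cases m with
      | zero => simp [altL]
      | succ m =>
          simpa [altL] using (ih (!c) m (by omega)).cons₂ c

lemma altL_sublist (c c' : Bool) (m N : ℕ) (h : m + 1 ≤ N) : altL c m <+ altL c' N := by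
  by_cases hc : c = c'
  · exact hc ▸ altL_sublist_same c m N (by omega)
  · have hc' : c = !c' := by cases c <;> cases c' <;> simp_all
    obtain ⟨N', rfl⟩ : ∃ N', N = N' + 1 := ⟨N - 1, by omega⟩
    have : altL c m <+ altL (!c') N' := hc' ▸ altL_sublist_same _ m N' (by omega)
    exact this.trans (List.sublist_cons_self c' _)

lemma gprod_altL_even (n : ℕ) (c : Bool) (p : ℕ) :
    gprod n (altL c (2 * p)) = if c then r (p : ZMod n) else r (-(p : ZMod n)) := by
  induction p with
  | zero => cases c <;> simp [gprod, altL]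
  | succ p ih =>
      have h2 : 2 * (p + 1) = 2 * p + 2 := by ring
      rw [h2, altL_two, gprod_cons, gprod_cons, ih]
      cases c <;>
        simp [gen, sr_mul_r, sr_mul_sr, r_mul_r, r_mul_sr] <;> push_cast <;> ring_nf

lemma gprod_altL_odd (n : ℕ) (c : Bool) (p : ℕ) :
    gprod n (altL c (2 * p + 1)) =
      if c then sr (-(p : ZMod n)) else sr (1 + (p : ZMod n)) := by
  induction p with
  | zero => cases c <;> simp [gprod, altL, gen]
  | succ p ih =>
      have h2 : 2 * (p + 1) + 1 = (2 * p + 1) + 2 := by ring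
      rw [h2, altL_two, gprod_cons, gprod_cons, ih]
      cases c <;>
        simp [gen, sr_mul_r, sr_mul_sr, r_mul_r, r_mul_sr, sr_mul_sr] <;> push_cast <;> ring_nf

/-- Reduction of a word to an alternating subword with the same dihedral value. -/
lemma exists_alt (n : ℕ) : ∀ (w : List Bool), ∃ v, v <+ w ∧ List.Chain' (· ≠ ·) v ∧
    gprod n v = gprod n w := by
  intro w
  induction w with
  | nil => exact ⟨[], by simp [List.Chain']⟩
  | cons x t ih =>
      obtain ⟨v, hsub, hch, hval⟩ := ih
      match v, hch with
      | [], _ => refine ⟨[x], (List.nil_sublist t).cons₂ x, by simp [List.Chain'], ?_⟩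
                 rw [gprod_cons, gprod_cons, hval]
      | (y :: v'), hch =>
          by_cases hxy : x = y
          · refine ⟨v', ((List.sublist_cons_self y v').trans hsub).trans
              (List.sublist_cons_self x t), hch.tail, ?_⟩
            have : gen n x * gen n y * gprod n v' = gen n x * gprod n t := by
              rw [mul_assoc, ← gprod_cons, hval, ← gprod_cons]
            rw [hxy, gen_mul_self, one_mul] at this
            rw [this, gprod_cons, hxy]
          · refine ⟨x :: y :: v', hsub.cons₂ x, List.isChain_cons_cons.mpr ⟨hxy, hch⟩, ?_⟩
            rw [gprod_cons, gprod_cons (w := t), hval]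

/-- tokens: (letter, selected). -/
def tokVal (n : ℕ) (t : Bool × Bool) : DihedralGroup n := if t.2 then gen n t.1 else 1

def valT (n : ℕ) (T : List (Bool × Bool)) : DihedralGroup n := (T.map (tokVal n)).prod

def selT (T : List (Bool × Bool)) : List Bool :=
  T.filterMap (fun p => if p.2 then some p.1 else none)

lemma valT_eq_gprod_selT (n : ℕ) (T : List (Bool × Bool)) : valT n T = gprod n (selT T) := by
  induction T with
  | nil => rfl
  | cons p T ih =>
      obtain ⟨c, s⟩ := p
      cases s <;> simp [valT, selT, tokVal, List.filterMap_cons, gprod_cons] at ih ⊢ <;>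
        simp [ih, gprod, valT, selT]

lemma selT_sublist (T : List (Bool × Bool)) : selT T <+ T.map Prod.fst := by
  induction T with
  | nil => simp [selT]
  | cons p T ih =>
      obtain ⟨c, s⟩ := p
      cases s
      · simpa [selT, List.filterMap_cons] using ih.trans (List.sublist_cons_self c _)
      · simpa [selT, List.filterMap_cons] using ih.cons₂ c

lemma sublist_sel {u ws : List Bool} (h : u <+ ws) :
    ∃ bs : List Bool, bs.length = ws.length ∧ selT (ws.zip bs) = u := by
  induction h with
  | slnil => exact ⟨[], rfl, rfl⟩
  | cons x h ih =>
      obtain ⟨bs, hlen, hsel⟩ := ih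
      exact ⟨false :: bs, by simp [hlen], by simpa [selT, List.filterMap_cons] using hsel⟩
  | cons_cons x h ih =>
      obtain ⟨bs, hlen, hsel⟩ := ih
      refine ⟨true :: bs, by simp [hlen], ?_⟩
      simp [selT, List.filterMap_cons] at hsel ⊢
      exact hsel

lemma zip_of_maps : ∀ (T : List (Bool × Bool)) (ws bs : List Bool),
    T.map Prod.fst = ws → T.map Prod.snd = bs → T = ws.zip bs
  | [], _, _, h1, h2 => by simp at h1 h2; simp [← h1, ← h2]
  | (p :: T), ws, bs, h1, h2 => by
      simp only [List.map_cons] at h1 h2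
      subst h1; subst h2
      simpa [List.zip] using zip_of_maps T _ _ rfl rfl

/-- every word over `dihGens` comes from a Bool word -/
lemma exists_bool_word (n : ℕ) : ∀ (w : List (DihedralGroup n)), (∀ x ∈ w, x ∈ dihGens n) →
    ∃ bw : List Bool, bw.map (gen n) = w := by
  intro w hw
  induction w with
  | nil => exact ⟨[], rfl⟩
  | cons x t ih =>
      obtain ⟨bw, hbw⟩ := ih (fun y hy => hw y (List.mem_cons_of_mem x hy))
      have hx := hw x (List.mem_cons_self (a := x) (l := t))
      simp only [dihGens, Set.mem_insert_iff, Set.mem_singleton_iff] at hx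
      rcases hx with rfl | rfl
      · exact ⟨true :: bw, by simp [gen, hbw]⟩
      · exact ⟨false :: bw, by simp [gen, hbw]⟩

lemma lengthWrt_le_of_word (n : ℕ) (t : DihedralGroup n) (w : List Bool)
    (h : gprod n w = t) : lengthWrt (dihGens n) t ≤ w.length :=
  Nat.sInf_le ⟨w.map (gen n), fun x hx => by
    obtain ⟨c, _, rfl⟩ := List.mem_map.mp hx; exact gen_mem n c, by simp, h⟩

lemma exists_word (n : ℕ) [NeZero n] (t : DihedralGroup n) :
    ∃ w : List Bool, gprod n w = t := by
  cases t with
  | r j =>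
      refine ⟨altL true (2 * j.val), ?_⟩
      rw [gprod_altL_even]
      simp [ZMod.natCast_rightInverse j]
  | sr j =>
      refine ⟨altL true (2 * (-j).val + 1), ?_⟩
      rw [gprod_altL_odd]
      have : (((-j).val : ℕ) : ZMod n) = -j := ZMod.natCast_rightInverse (-j)
      simp [this]

/-- an alternating word computing `t` of length at most `|t|`. -/
lemma exists_alt_word (n : ℕ) [NeZero n] (t : DihedralGroup n) :
    ∃ u : List Bool, List.Chain' (· ≠ ·) u ∧ gprod n u = t ∧
      u.length ≤ lengthWrt (dihGens n) t := by
  obtain ⟨w0, hw0⟩ := exists_word n t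
  have hne : {m | ∃ L : List (DihedralGroup n), (∀ x ∈ L, x ∈ dihGens n) ∧
      L.length = m ∧ L.prod = t}.Nonempty := by
    refine ⟨w0.length, w0.map (gen n), fun x hx => ?_, by simp, hw0⟩
    obtain ⟨c, _, rfl⟩ := List.mem_map.mp hx; exact gen_mem n c
  have hmem := Nat.sInf_mem hne
  obtain ⟨L, hL, hlen, hprod⟩ := hmem
  obtain ⟨bw, rfl⟩ := exists_bool_word n L hL
  obtain ⟨v, hsub, hch, hval⟩ := exists_alt n bw
  refine ⟨v, hch, by rw [hval]; exact hprod, ?_⟩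
  calc v.length ≤ bw.length := hsub.length_le
    _ = (bw.map (gen n)).length := by simp
    _ = lengthWrt (dihGens n) t := hlen

lemma alt_word_r_l_length {l : ℕ} (hl : 1 ≤ l) (v : List Bool)
    (hch : List.Chain' (· ≠ ·) v)
    (hval : gprod (2 * l) v = r ((l : ℕ) : ZMod (2 * l))) : 2 * l ≤ v.length := by
  have hv := chain'_eq_altL v hch
  set c := v.headD true with hc
  clear_value c
  have h2l : ((l : ℕ) : ZMod (2 * l)) + ((l : ℕ) : ZMod (2 * l)) = 0 := by
    have h0 := ZMod.natCast_self (2 * l)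
    push_cast at h0 ⊢
    linear_combination h0
  rcases Nat.even_or_odd v.length with ⟨p, hp⟩ | ⟨p, hp⟩
  · -- even
    have heq : r ((l:ℕ) : ZMod (2*l)) =
        if c then r (p : ZMod (2 * l)) else r (-(p : ZMod (2 * l))) := by
      rw [← hval, hv, show v.length = 2 * p by omega, gprod_altL_even]
    have hpl : (p : ZMod (2 * l)) = ((l : ℕ) : ZMod (2 * l)) := by
      cases c with
      | true =>
          simp only [if_true] at heq
          injection heq with h
          exact h.symm
      | false =>
          simp only [if_false, Bool.false_eq_true] at heq
          injection heq with h
          have : -(p : ZMod (2*l)) = -((l:ℕ) : ZMod (2*l)) := by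
            rw [← h]
            linear_combination h2l
          exact neg_injective this
    rw [ZMod.natCast_eq_natCast_iff] at hpl
    have h1 : p % (2 * l) = l := by
      have : p % (2*l) = l % (2*l) := hpl
      rwa [Nat.mod_eq_of_lt (by omega : l < 2 * l)] at this
    have : l ≤ p := h1 ▸ Nat.mod_le p (2 * l)
    omega
  · -- odd : contradiction
    exfalso
    have heq : r ((l:ℕ) : ZMod (2*l)) =
        if c then sr (-(p : ZMod (2*l))) else sr (1 + (p : ZMod (2*l))) := by
      rw [← hval, hv, show v.length = 2 * p + 1 by omega, gprod_altL_odd]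
    cases c <;> simp only [if_true, if_false, Bool.false_eq_true] at heq <;> exact
      (by simpa using heq)

/-- A word computing `r l` in `D_{2l}` has length at least `2l`. -/
lemma r_l_lower {l : ℕ} (hl : 1 ≤ l) (w : List Bool)
    (hval : gprod (2 * l) w = r ((l : ℕ) : ZMod (2 * l))) : 2 * l ≤ w.length := by
  obtain ⟨v, hsub, hch, hv⟩ := exists_alt (2 * l) w
  exact le_trans (alt_word_r_l_length hl v hch (hv.trans hval)) hsub.length_le

/-- Core combinatorial re-selection lemma. -/
lemma reselect {l : ℕ} (hl : 1 ≤ l) (T : List (Bool × Bool)) (t : DihedralGroup (2 * l))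
    (h1 : valT (2 * l) T = t * r ((l : ℕ) : ZMod (2 * l)))
    (h2 : 2 * lengthWrt (dihGens (2 * l)) t ≤ l) :
    ∃ bs : List Bool, bs.length = T.length ∧ valT (2 * l) ((T.map Prod.fst).zip bs) = t := by
  have : NeZero (2 * l) := ⟨by omega⟩
  set m := lengthWrt (dihGens (2 * l)) t with hm
  -- the selected word
  have hw : gprod (2 * l) (selT T) = t * r ((l : ℕ) : ZMod (2 * l)) := by
    rw [← valT_eq_gprod_selT]; exact h1
  obtain ⟨v, hsubv, hchv, hvalv⟩ := exists_alt (2 * l) (selT T)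
  rw [hw] at hvalv
  obtain ⟨u, hchu, hvalu, hlenu⟩ := exists_alt_word (2 * l) t
  -- lower bound on length of v
  have hrl : gprod (2 * l) (u.reverse ++ v) = r ((l : ℕ) : ZMod (2 * l)) := by
    rw [gprod_append, gprod_reverse, hvalu, hvalv]
    group
  have hlb : 2 * l ≤ u.length + v.length := by
    have := r_l_lower hl _ hrl
    simpa [Nat.add_comm] using this
  have hlen : u.length + 1 ≤ v.length := by omega
  -- embed u into v
  have huv : u <+ v := by
    have hu := chain'_eq_altL u hchu
    have hv := chain'_eq_altL v hchv
    rw [hu, hv]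
    exact altL_sublist _ _ _ _ (by simpa using hlen)
  have husub : u <+ T.map Prod.fst := (huv.trans hsubv).trans (selT_sublist T)
  obtain ⟨bs, hbslen, hbssel⟩ := sublist_sel husub
  refine ⟨bs, by simpa using hbslen, ?_⟩
  rw [valT_eq_gprod_selT, hbssel, hvalu]

/-! ### Wreath product machinery -/

/-- abstract switch: order flag, and the two exponents for `a`-token and `b`-token -/
structure Sw where
  o : Bool
  ea : Bool
  eb : Bool

/-- abstract switch-walk-switch letter -/
structure Lt where
  s1 : Sw
  e : Bool
  s2 : Sw

def swF (k n : ℕ) (s : Sw) : ℤ → DihedralGroup n := fun y =>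
  if s.o then
    (if y = 0 then pw (sr 0) s.ea else 1) * (if y = (k : ℤ) then pw (sr 1) s.eb else 1)
  else
    (if y = (k : ℤ) then pw (sr 1) s.eb else 1) * (if y = 0 then pw (sr 0) s.ea else 1)

def swW (k n : ℕ) (s : Sw) : Wr ℤ (DihedralGroup n) := ⟨swF k n s, 1⟩

lemma wr_mul {L : Type*} [Group L] (f g : ℤ → L) (t u : Multiplicative ℤ) :
    (⟨f, t⟩ * ⟨g, u⟩ : Wr ℤ L) = ⟨fun x => f x * g (x - t.toAdd), t * u⟩ :=
  rfl

lemma swW_true (k n : ℕ) (ea eb : Bool) :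
    swW k n ⟨true, ea, eb⟩ = pw (alphaG n) ea * pw (betaG k n) eb := by
  cases ea <;> cases eb <;>
    refine SemidirectProduct.ext ?_ rfl <;> funext y <;>
      simp [swW, swF, pw, alphaG, betaG, delta, tauG, SemidirectProduct.mul_left,
        Pi.mul_apply, map_one]
lemma swW_false (k n : ℕ) (ea eb : Bool) :
    swW k n ⟨false, ea, eb⟩ = pw (betaG k n) eb * pw (alphaG n) ea := by
  cases ea <;> cases eb <;>
    refine SemidirectProduct.ext ?_ rfl <;> funext y <;>
      simp [swW, swF, pw, alphaG, betaG, delta, tauG, SemidirectProduct.mul_left,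
        Pi.mul_apply, map_one]

lemma swW_mem (k n : ℕ) (s : Sw) : swW k n s ∈ swsU k n := by
  obtain ⟨o, ea, eb⟩ := s
  cases o
  · exact ⟨eb, ea, Or.inr (swW_false k n ea eb)⟩
  · exact ⟨ea, eb, Or.inl (swW_true k n ea eb)⟩

lemma exists_swW (k n : ℕ) {u : Wr ℤ (DihedralGroup n)} (h : u ∈ swsU k n) :
    ∃ s : Sw, u = swW k n s := by
  obtain ⟨e1, e2, h | h⟩ := h
  · exact ⟨⟨true, e1, e2⟩, h.trans (swW_true k n e1 e2).symm⟩
  · exact ⟨⟨false, e2, e1⟩, h.trans (swW_false k n e2 e1).symm⟩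

def wlkW (n : ℕ) (e : Bool) : Wr ℤ (DihedralGroup n) :=
  ⟨1, Multiplicative.ofAdd (if e then 1 else -1)⟩

lemma wlk_true (n : ℕ) : wlkW n true = tauG n := rfl

lemma wlk_false (n : ℕ) : wlkW n false = (tauG n)⁻¹ := by
  refine eq_inv_of_mul_eq_one_left ?_
  refine SemidirectProduct.ext ?_ ?_
  · funext y
    simp [wlkW, tauG, SemidirectProduct.mul_left, map_one]
  · simp [wlkW, tauG, SemidirectProduct.mul_right, ← ofAdd_add]

def ltW (k n : ℕ) (c : Lt) : Wr ℤ (DihedralGroup n) :=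
  swW k n c.s1 * wlkW n c.e * swW k n c.s2

lemma ltW_mem (k n : ℕ) (c : Lt) : ltW k n c ∈ swsSet k n := by
  refine ⟨swW k n c.s1, swW_mem k n c.s1, swW k n c.s2, swW_mem k n c.s2, ?_⟩
  cases he : c.e
  · exact Or.inr (by rw [ltW, he, wlk_false])
  · exact Or.inl (by rw [ltW, he, wlk_true])

lemma exists_ltW (k n : ℕ) {g : Wr ℤ (DihedralGroup n)} (h : g ∈ swsSet k n) :
    ∃ c : Lt, g = ltW k n c := by
  obtain ⟨u1, hu1, u2, hu2, h | h⟩ := h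
  · obtain ⟨s1, rfl⟩ := exists_swW k n hu1
    obtain ⟨s2, rfl⟩ := exists_swW k n hu2
    exact ⟨⟨s1, true, s2⟩, by rw [ltW, wlk_true]; exact h⟩
  · obtain ⟨s1, rfl⟩ := exists_swW k n hu1
    obtain ⟨s2, rfl⟩ := exists_swW k n hu2
    exact ⟨⟨s1, false, s2⟩, by rw [ltW, wlk_false]; exact h⟩

def disp (c : Lt) : ℤ := if c.e then 1 else -1

def sumD (cs : List Lt) : ℤ := (cs.map disp).sum

def lampAt (k n : ℕ) : ℤ → List Lt → DihedralGroup n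
  | _, [] => 1
  | x, c :: cs => swF k n c.s1 x * swF k n c.s2 (x - disp c) * lampAt k n (x - disp c) cs

lemma ltW_eq (k n : ℕ) (c : Lt) :
    ltW k n c = ⟨fun x => swF k n c.s1 x * swF k n c.s2 (x - disp c),
      Multiplicative.ofAdd (disp c)⟩ := by
  refine SemidirectProduct.ext ?_ ?_
  · funext y
    cases he : c.e <;>
      simp only [ltW, swW, wlkW, disp, he, SemidirectProduct.mul_left,
        SemidirectProduct.mul_right] <;>
      simp [SemidirectProduct.mul_left, SemidirectProduct.mul_right, shiftHom, shiftEquiv,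
        Pi.mul_apply, map_one, -SemidirectProduct.mk_eq_inl_mul_inr]
  · cases he : c.e <;>
      simp [ltW, swW, wlkW, disp, he, SemidirectProduct.mul_right]

lemma prodW (k n : ℕ) : ∀ (cs : List Lt),
    ((cs.map (ltW k n)).prod : Wr ℤ (DihedralGroup n)) =
      ⟨fun x => lampAt k n x cs, Multiplicative.ofAdd (sumD cs)⟩ := by
  intro cs
  induction cs with
  | nil =>
      refine SemidirectProduct.ext ?_ ?_
      · funext x; simp [lampAt]
      · simp [sumD]
  | cons c cs ih =>
      rw [List.map_cons, List.prod_cons, ih, ltW_eq, wr_mul]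
      refine SemidirectProduct.ext ?_ ?_
      · funext y
        simp [lampAt, sumD]
      · show Multiplicative.ofAdd (disp c) * Multiplicative.ofAdd (sumD cs) = _
        rw [← ofAdd_add]
        simp only [sumD, List.map_cons, List.sum_cons]

def tokSw (k : ℕ) (y : ℤ) (s : Sw) : List (Bool × Bool) :=
  if s.o then
    (if y = 0 then [(true, s.ea)] else []) ++ (if y = (k : ℤ) then [(false, s.eb)] else [])
  else
    (if y = (k : ℤ) then [(false, s.eb)] else []) ++ (if y = 0 then [(true, s.ea)] else [])

def tokens (k : ℕ) : ℤ → List Lt → List (Bool × Bool)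
  | _, [] => []
  | x, c :: cs => tokSw k x c.s1 ++ tokSw k (x - disp c) c.s2 ++ tokens k (x - disp c) cs

lemma valT_append (n : ℕ) (T1 T2 : List (Bool × Bool)) :
    valT n (T1 ++ T2) = valT n T1 * valT n T2 := by simp [valT]

lemma swF_eq (k n : ℕ) (y : ℤ) (s : Sw) : swF k n s y = valT n (tokSw k y s) := by
  obtain ⟨o, ea, eb⟩ := s
  by_cases h0 : y = 0
  · by_cases hk : y = (k : ℤ)
    · cases o <;> simp [swF, tokSw, valT, tokVal, pw, gen, eq_true h0, eq_true hk]
    · cases o <;> simp [swF, tokSw, valT, tokVal, pw, gen, eq_true h0, eq_false hk]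
  · by_cases hk : y = (k : ℤ)
    · cases o <;> simp [swF, tokSw, valT, tokVal, pw, gen, eq_false h0, eq_true hk]
    · cases o <;> simp [swF, tokSw, valT, tokVal, pw, gen, eq_false h0, eq_false hk]

lemma lampAt_eq (k n : ℕ) : ∀ (x : ℤ) (cs : List Lt),
    lampAt k n x cs = valT n (tokens k x cs) := by
  intro x cs
  induction cs generalizing x with
  | nil => simp [lampAt, tokens, valT]
  | cons c cs ih =>
      rw [show tokens k x (c :: cs) =
        tokSw k x c.s1 ++ tokSw k (x - disp c) c.s2 ++ tokens k (x - disp c) cs from rfl,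
        valT_append, valT_append, ← swF_eq, ← swF_eq, ← ih]
      rfl

/-! ### Re-selection of switches -/

lemma reselSw (k : ℕ) (y : ℤ) (s : Sw) (bs : List Bool)
    (hlen : bs.length = (tokSw k y s).length) :
    ∃ s' : Sw,
      (∀ z : ℤ, z ≠ y → tokSw k z s' = tokSw k z s) ∧
      (tokSw k y s').map Prod.fst = (tokSw k y s).map Prod.fst ∧
      (tokSw k y s').map Prod.snd = bs := by
  obtain ⟨o, ea, eb⟩ := s
  by_cases h0 : y = 0
  · by_cases hk : y = (k : ℤ)
    · have hL : (tokSw k y ⟨o, ea, eb⟩).length = 2 := by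
        cases o <;> simp [tokSw, eq_true h0, eq_true hk]
      rw [hL] at hlen
      rcases bs with _ | ⟨b0, _ | ⟨b1, _ | ⟨b2, bs⟩⟩⟩ <;> simp at hlen
      refine ⟨⟨o, if o then b0 else b1, if o then b1 else b0⟩, ?_, ?_, ?_⟩
      · intro z hz
        have hz0 : ¬ z = 0 := h0 ▸ hz
        have hzk : ¬ z = (k : ℤ) := hk ▸ hz
        cases o <;> simp [tokSw, eq_false hz0, eq_false hzk]
      · cases o <;> simp [tokSw, eq_true h0, eq_true hk]
      · cases o <;> simp [tokSw, eq_true h0, eq_true hk]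
    · have hL : (tokSw k y ⟨o, ea, eb⟩).length = 1 := by
        cases o <;> simp [tokSw, eq_true h0, eq_false hk]
      rw [hL] at hlen
      rcases bs with _ | ⟨b0, _ | ⟨b1, bs⟩⟩ <;> simp at hlen
      refine ⟨⟨o, b0, eb⟩, ?_, ?_, ?_⟩
      · intro z hz
        have hz0 : ¬ z = 0 := h0 ▸ hz
        cases o <;> simp [tokSw, eq_false hz0]
      · cases o <;> simp [tokSw, eq_true h0, eq_false hk]
      · cases o <;> simp [tokSw, eq_true h0, eq_false hk]
  · by_cases hk : y = (k : ℤ)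
    · have hL : (tokSw k y ⟨o, ea, eb⟩).length = 1 := by
        cases o <;> simp [tokSw, eq_false h0, eq_true hk]
      rw [hL] at hlen
      rcases bs with _ | ⟨b0, _ | ⟨b1, bs⟩⟩ <;> simp at hlen
      refine ⟨⟨o, ea, b0⟩, ?_, ?_, ?_⟩
      · intro z hz
        have hzk : ¬ z = (k : ℤ) := hk ▸ hz
        cases o <;> simp [tokSw, eq_false hzk]
      · cases o <;> simp [tokSw, eq_false h0, eq_true hk]
      · cases o <;> simp [tokSw, eq_false h0, eq_true hk]
    · have hL : (tokSw k y ⟨o, ea, eb⟩).length = 0 := by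
        cases o <;> simp [tokSw, eq_false h0, eq_false hk]
      rw [hL] at hlen
      rcases bs with _ | ⟨b0, bs⟩ <;> simp at hlen ⊢
      exact ⟨⟨o, ea, eb⟩, fun z _ => rfl, rfl, by
        cases o <;> simp [tokSw, eq_false h0, eq_false hk]⟩

lemma resel (k : ℕ) : ∀ (cs : List Lt) (x : ℤ) (bs : List Bool),
    bs.length = (tokens k x cs).length →
    ∃ cs' : List Lt, cs'.length = cs.length ∧ cs'.map disp = cs.map disp ∧
      (∀ y : ℤ, y ≠ x → tokens k y cs' = tokens k y cs) ∧
      (tokens k x cs').map Prod.fst = (tokens k x cs).map Prod.fst ∧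
      (tokens k x cs').map Prod.snd = bs := by
  intro cs
  induction cs with
  | nil =>
      intro x bs hlen
      refine ⟨[], rfl, rfl, fun _ _ => rfl, rfl, ?_⟩
      have : bs = [] := List.length_eq_zero_iff.mp (by simpa [tokens] using hlen)
      simp [tokens, this]
  | cons c cs ih =>
      intro x bs hlen
      have htok : tokens k x (c :: cs) =
          tokSw k x c.s1 ++ tokSw k (x - disp c) c.s2 ++ tokens k (x - disp c) cs := rfl
      set n1 := (tokSw k x c.s1).length with hn1
      set n2 := (tokSw k (x - disp c) c.s2).length with hn2
      have hlen' : bs.length = n1 + n2 + (tokens k (x - disp c) cs).length := by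
        rw [hlen, htok]; simp [List.length_append]; omega
      have h1 : (bs.take n1).length = n1 := by simp; omega
      have h2 : ((bs.drop n1).take n2).length = n2 := by simp; omega
      have h3 : ((bs.drop n1).drop n2).length = (tokens k (x - disp c) cs).length := by
        simp; omega
      obtain ⟨s1', hz1, hf1, hs1⟩ := reselSw k x c.s1 (bs.take n1) h1
      obtain ⟨s2', hz2, hf2, hs2⟩ := reselSw k (x - disp c) c.s2 ((bs.drop n1).take n2) h2
      obtain ⟨cs', hlc, hdc, hzc, hfc, hsc⟩ := ih (x - disp c) ((bs.drop n1).drop n2) h3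
      have hde : disp (⟨s1', c.e, s2'⟩ : Lt) = disp c := rfl
      refine ⟨⟨s1', c.e, s2'⟩ :: cs', by simp [hlc], ?_, ?_, ?_, ?_⟩
      · simp only [List.map_cons, hdc, hde]
      · intro y hy
        show tokSw k y s1' ++ tokSw k (y - disp (⟨s1', c.e, s2'⟩ : Lt)) s2' ++
          tokens k (y - disp (⟨s1', c.e, s2'⟩ : Lt)) cs' = _
        have htoky : tokens k y (c :: cs) =
            tokSw k y c.s1 ++ tokSw k (y - disp c) c.s2 ++ tokens k (y - disp c) cs := rfl
        rw [hde, hz1 y hy, hz2 _ (fun h => hy (sub_left_inj.mp h)),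
          hzc _ (fun h => hy (sub_left_inj.mp h)), htoky]
      · show (tokSw k x s1' ++ tokSw k (x - disp (⟨s1', c.e, s2'⟩ : Lt)) s2' ++
          tokens k (x - disp (⟨s1', c.e, s2'⟩ : Lt)) cs').map Prod.fst = _
        rw [hde, htok]
        simp only [List.map_append]
        rw [hf1, hf2, hfc]
      · show (tokSw k x s1' ++ tokSw k (x - disp (⟨s1', c.e, s2'⟩ : Lt)) s2' ++
          tokens k (x - disp (⟨s1', c.e, s2'⟩ : Lt)) cs').map Prod.snd = _
        rw [hde]
        simp only [List.map_append]
        rw [hs1, hs2, hsc, List.append_assoc, List.take_append_drop, List.take_append_drop]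

/-! ### The projection and its fibers -/

section Pi

variable {l : ℕ} (π : DihedralGroup (2 * l) →* DihedralGroup l)
  (hπa : π (DihedralGroup.sr 0) = DihedralGroup.sr 0)
  (hπb : π (DihedralGroup.sr 1) = DihedralGroup.sr 1)

include hπa hπb

lemma pi_gen (c : Bool) : π (gen (2 * l) c) = gen l c := by
  cases c <;> simp [gen, hπa, hπb]

lemma pi_tokVal (t : Bool × Bool) : π (tokVal (2 * l) t) = tokVal l t := by
  obtain ⟨c, s⟩ := t
  cases s <;> simp [tokVal, pi_gen π hπa hπb, map_one]

lemma pi_valT (T : List (Bool × Bool)) : π (valT (2 * l) T) = valT l T := by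
  induction T with
  | nil => simp [valT]
  | cons t T ih =>
      simp only [valT, List.map_cons, List.prod_cons, map_mul] at ih ⊢
      rw [pi_tokVal π hπa hπb, ih]

lemma pi_lamp (k : ℕ) (x : ℤ) (cs : List Lt) :
    π (lampAt k (2 * l) x cs) = lampAt k l x cs := by
  rw [lampAt_eq, lampAt_eq, pi_valT π hπa hπb]

lemma pi_r_one : π (r 1) = r 1 := by
  have h1 : (sr 0 : DihedralGroup (2 * l)) * sr 1 = r 1 := by rw [sr_mul_sr, sub_zero]
  have h2 : (sr 0 : DihedralGroup l) * sr 1 = r 1 := by rw [sr_mul_sr, sub_zero]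
  rw [← h1, map_mul, hπa, hπb, h2]

lemma pi_r (hl : 1 ≤ l) (j : ZMod (2 * l)) :
    π (r j) = r ((j.val : ℕ) : ZMod l) := by
  haveI : NeZero (2 * l) := ⟨by omega⟩
  have h : (r j : DihedralGroup (2 * l)) = (r 1) ^ (j.val) := by
    rw [r_one_pow]
    exact congrArg r (ZMod.natCast_rightInverse j).symm
  rw [h, map_pow, pi_r_one π hπa hπb, r_one_pow]

lemma pi_sr (hl : 1 ≤ l) (j : ZMod (2 * l)) :
    π (sr j) = sr ((j.val : ℕ) : ZMod l) := by
  haveI : NeZero (2 * l) := ⟨by omega⟩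
  have hsr : (r (-j) : DihedralGroup (2 * l)) * sr 0 = sr j := by
    rw [r_mul_sr, zero_sub, neg_neg]
  have hneg : (((-j).val : ℕ) : ZMod l) = -((j.val : ℕ) : ZMod l) := by
    have hdvd : (2 * l : ℕ) ∣ ((-j).val + j.val) := by
      rw [← ZMod.natCast_eq_zero_iff]
      push_cast
      rw [ZMod.natCast_val, ZMod.natCast_val]
      simp [ZMod.cast_id]
    have hdvd' : (l : ℕ) ∣ ((-j).val + j.val) := dvd_trans ⟨2, by ring⟩ hdvd
    have h0 : (((-j).val + j.val : ℕ) : ZMod l) = 0 := by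
      rw [ZMod.natCast_eq_zero_iff]
      exact hdvd'
    push_cast at h0
    linear_combination h0
  rw [← hsr, map_mul, pi_r π hπa hπb hl, hπa, r_mul_sr, zero_sub, hneg, neg_neg]

omit π hπa hπb in
lemma zmod_fiber (hl : 1 ≤ l) (i j : ZMod (2 * l))
    (h : ((i.val : ℕ) : ZMod l) = ((j.val : ℕ) : ZMod l)) :
    i = j ∨ i = j + ((l : ℕ) : ZMod (2 * l)) := by
  haveI : NeZero (2 * l) := ⟨by omega⟩
  have hi : i.val < 2 * l := ZMod.val_lt i
  have hj : j.val < 2 * l := ZMod.val_lt j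
  have hmod : (i.val : ℤ) ≡ (j.val : ℤ) [ZMOD l] := by
    rw [← ZMod.intCast_eq_intCast_iff]
    push_cast
    rw [ZMod.natCast_eq_natCast_iff] at h ⊢
    exact h
  have hd : (l : ℤ) ∣ ((j.val : ℤ) - (i.val : ℤ)) := Int.ModEq.dvd hmod
  obtain ⟨d, hdd⟩ := hd
  have hdb : d = -1 ∨ d = 0 ∨ d = 1 := by
    rcases lt_trichotomy d 0 with h' | h' | h'
    · left
      by_contra hne
      have : d ≤ -2 := by omega
      nlinarith
    · right; left; exact h'
    · right; right
      by_contra hne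
      have : 2 ≤ d := by omega
      nlinarith
  have hcast : ∀ m : ZMod (2 * l), ((m.val : ℕ) : ZMod (2 * l)) = m := fun m =>
    ZMod.natCast_rightInverse m
  have hll : ((l : ℕ) : ZMod (2 * l)) + ((l : ℕ) : ZMod (2 * l)) = 0 := by
    have h0 := ZMod.natCast_self (2 * l)
    push_cast at h0 ⊢
    linear_combination h0
  rcases hdb with rfl | rfl | rfl
  · -- j.val - i.val = -l, so i.val = j.val + l
    right
    have : i.val = j.val + l := by omega
    rw [← hcast i, ← hcast j, this]
    push_cast
    ring
  · left
    have : i.val = j.val := by omega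
    rw [← hcast i, ← hcast j, this]
  · -- j.val = i.val + l, so i = j - l = j + l
    right
    have hvj : j.val = i.val + l := by omega
    have : (j : ZMod (2 * l)) = i + ((l : ℕ) : ZMod (2 * l)) := by
      rw [← hcast i, ← hcast j, hvj]
      push_cast
      ring
    rw [this, add_assoc, hll, add_zero]

lemma pi_fiber (hl : 1 ≤ l) (g t : DihedralGroup (2 * l)) (h : π g = π t) :
    g = t ∨ g = t * r ((l : ℕ) : ZMod (2 * l)) := by
  cases g with
  | r i =>
      cases t with
      | r j =>
          rw [pi_r π hπa hπb hl, pi_r π hπa hπb hl] at h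
          have h' : ((i.val : ℕ) : ZMod l) = ((j.val : ℕ) : ZMod l) := by
            injection h
          rcases zmod_fiber hl i j h' with rfl | hh
          · exact Or.inl rfl
          · right; rw [r_mul_r, ← hh]
      | sr j =>
          rw [pi_r π hπa hπb hl, pi_sr π hπa hπb hl] at h
          exact absurd h (by simp)
  | sr i =>
      cases t with
      | r j =>
          rw [pi_sr π hπa hπb hl, pi_r π hπa hπb hl] at h
          exact absurd h (by simp)
      | sr j =>
          rw [pi_sr π hπa hπb hl, pi_sr π hπa hπb hl] at h
          have h' : ((i.val : ℕ) : ZMod l) = ((j.val : ℕ) : ZMod l) := by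
            injection h
          rcases zmod_fiber hl i j h' with rfl | hh
          · exact Or.inl rfl
          · right; rw [sr_mul_r, ← hh]

end Pi

/-! ### Finiteness of the support of the lamp configuration of a word -/

lemma tokSw_nil (k : ℕ) (y : ℤ) (s : Sw) (h0 : ¬ y = 0) (hk : ¬ y = (k : ℤ)) :
    tokSw k y s = [] := by
  obtain ⟨o, ea, eb⟩ := s
  cases o <;> simp [tokSw, eq_false h0, eq_false hk]

lemma tokens_finite (k : ℕ) : ∀ cs : List Lt, {x : ℤ | tokens k x cs ≠ []}.Finite := by
  intro cs
  induction cs with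
  | nil =>
      have h : {x : ℤ | tokens k x ([] : List Lt) ≠ []} = ∅ := by
        ext x; simp [tokens]
      rw [h]; exact Set.finite_empty
  | cons c cs ih =>
      have hinj : Function.Injective (fun x : ℤ => x - disp c) := fun a b h => by
        simpa [sub_left_inj] using h
      refine Set.Finite.subset
        (Set.Finite.union
          (Set.Finite.union
            ((Set.finite_singleton (0 : ℤ)).insert (k : ℤ))
            ((Set.finite_singleton (disp c)).insert ((k : ℤ) + disp c)))
          (Set.Finite.preimage hinj.injOn ih)) ?_
      intro x hx
      have hsplit : tokSw k x c.s1 ≠ [] ∨ tokSw k (x - disp c) c.s2 ≠ [] ∨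
          tokens k (x - disp c) cs ≠ [] := by
        by_contra hno
        push_neg at hno
        apply hx
        show tokSw k x c.s1 ++ tokSw k (x - disp c) c.s2 ++ tokens k (x - disp c) cs = []
        rw [hno.1, hno.2.1, hno.2.2]
        rfl
      rcases hsplit with h | h | h
      · left; left
        by_contra hc
        simp only [Set.mem_insert_iff, Set.mem_singleton_iff] at hc
        push_neg at hc
        exact h (tokSw_nil k x c.s1 hc.2 hc.1)
      · left; right
        by_contra hc
        simp only [Set.mem_insert_iff, Set.mem_singleton_iff] at hc
        push_neg at hc
        refine h (tokSw_nil k (x - disp c) c.s2 ?_ ?_)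
        · intro hz; exact hc.2 (by omega)
        · intro hz; exact hc.1 (by omega)
      · right
        exact h

/-! ### Fixing the lamps one site at a time -/

section Fix

variable {l : ℕ} (hl : 1 ≤ l) (π : DihedralGroup (2 * l) →* DihedralGroup l)
  (hπa : π (DihedralGroup.sr 0) = DihedralGroup.sr 0)
  (hπb : π (DihedralGroup.sr 1) = DihedralGroup.sr 1)

include hl hπa hπb

lemma siteFix (k : ℕ) (f : ℤ → DihedralGroup (2 * l)) (x : ℤ) (cs : List Lt)
    (hπx : π (lampAt k (2 * l) x cs) = π (f x))
    (hbx : 2 * lengthWrt (dihGens (2 * l)) (f x) ≤ l) :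
    ∃ cs' : List Lt, cs'.length = cs.length ∧ cs'.map disp = cs.map disp ∧
      (∀ y : ℤ, y ≠ x → tokens k y cs' = tokens k y cs) ∧
      lampAt k (2 * l) x cs' = f x := by
  by_cases heq : lampAt k (2 * l) x cs = f x
  · exact ⟨cs, rfl, rfl, fun _ _ => rfl, heq⟩
  · rcases pi_fiber π hπa hπb hl _ _ hπx with h | h
    · exact absurd h heq
    · have hval : valT (2 * l) (tokens k x cs) = f x * r ((l : ℕ) : ZMod (2 * l)) := by
        rw [← lampAt_eq]; exact h
      obtain ⟨bs, hbslen, hbsval⟩ := reselect hl (tokens k x cs) (f x) hval hbx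
      obtain ⟨cs', g1, g2, g3, g4, g5⟩ := resel k cs x bs (by rw [hbslen])
      refine ⟨cs', g1, g2, g3, ?_⟩
      rw [lampAt_eq, zip_of_maps (tokens k x cs') ((tokens k x cs).map Prod.fst) bs g4 g5,
        hbsval]

lemma fixAll (k : ℕ) (f : ℤ → DihedralGroup (2 * l))
    (hbound : ∀ x : ℤ, 2 * lengthWrt (dihGens (2 * l)) (f x) ≤ l) :
    ∀ (F : Finset ℤ) (cs : List Lt),
    (∀ x : ℤ, lampAt k (2 * l) x cs ≠ f x → x ∈ F) →
    (∀ x : ℤ, π (lampAt k (2 * l) x cs) = π (f x)) →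
    ∃ cs' : List Lt, cs'.length = cs.length ∧ cs'.map disp = cs.map disp ∧
      ∀ x : ℤ, lampAt k (2 * l) x cs' = f x := by
  intro F
  induction F using Finset.induction_on with
  | empty =>
      intro cs hbad _
      refine ⟨cs, rfl, rfl, fun x => ?_⟩
      by_contra hc
      exact absurd (hbad x hc) (Finset.notMem_empty x)
  | @insert a F hnm ih =>
      intro cs hbad hπc
      obtain ⟨cs1, h1, h2, h3, h4⟩ := siteFix hl π hπa hπb k f a cs (hπc a) (hbound a)
      have hlampy : ∀ y : ℤ, y ≠ a → lampAt k (2 * l) y cs1 = lampAt k (2 * l) y cs := by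
        intro y hy
        rw [lampAt_eq, lampAt_eq, h3 y hy]
      have hbad1 : ∀ x : ℤ, lampAt k (2 * l) x cs1 ≠ f x → x ∈ F := by
        intro x hx
        have hxa : x ≠ a := fun hh => hx (hh ▸ h4)
        have : x ∈ insert a F := hbad x (by rw [← hlampy x hxa]; exact hx)
        rcases Finset.mem_insert.mp this with hh | hh
        · exact absurd hh hxa
        · exact hh
      have hπ1 : ∀ x : ℤ, π (lampAt k (2 * l) x cs1) = π (f x) := by
        intro x
        by_cases hxa : x = a
        · subst hxa; rw [h4]
        · rw [hlampy x hxa]; exact hπc x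
      obtain ⟨cs', g1, g2, g3⟩ := ih cs1 hbad1 hπ1
      exact ⟨cs', g1.trans h1, g2.trans h2, g3⟩

end Fix

lemma exists_cs (k n : ℕ) : ∀ (L : List (Wr ℤ (DihedralGroup n))),
    (∀ x ∈ L, x ∈ swsSet k n) → ∃ cs : List Lt, L = cs.map (ltW k n) := by
  intro L
  induction L with
  | nil => exact fun _ => ⟨[], rfl⟩
  | cons g L ih =>
      intro hmem
      obtain ⟨cs, rfl⟩ := ih (fun x hx => hmem x (List.mem_cons_of_mem g hx))
      obtain ⟨c, rfl⟩ := exists_ltW k n (hmem g (List.mem_cons_self (a := g)))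
      exact ⟨c :: cs, rfl⟩

end S16aux
end

/-- If `Z^{2l} = (i, f) ∈ ℤ ≀ D_{2l}` has all lamps of length `|f(x)| ≤ l/2`, and
`Z^l = (i, π ∘ f)` is its image under the quotient map `π : D_{2l} → D_l` (the unique
homomorphism with `π(a) = a`, `π(b) = b`), then `|Z^{2l}| = |Z^l|` for the respective
switch-walk-switch word lengths with the same shift parameter `k`. -/
theorem stmt16 (k l : ℕ) (hl : 1 ≤ l)
    (π : DihedralGroup (2 * l) →* DihedralGroup l)
    (hπa : π (DihedralGroup.sr 0) = DihedralGroup.sr 0)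
    (hπb : π (DihedralGroup.sr 1) = DihedralGroup.sr 1)
    (i : ℤ) (f : ℤ → DihedralGroup (2 * l))
    (hf : {x : ℤ | f x ≠ 1}.Finite)
    (hbound : ∀ x : ℤ, 2 * lengthWrt (dihGens (2 * l)) (f x) ≤ l) :
    lengthWrt (swsSet k (2 * l)) (⟨f, Multiplicative.ofAdd i⟩ : Wr ℤ (DihedralGroup (2 * l))) =
      lengthWrt (swsSet k l)
        (⟨fun x => π (f x), Multiplicative.ofAdd i⟩ : Wr ℤ (DihedralGroup l)) := by
  classical
  have hset : {n' | ∃ L : List (Wr ℤ (DihedralGroup (2 * l))),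
        (∀ x ∈ L, x ∈ swsSet k (2 * l)) ∧ L.length = n' ∧
          L.prod = (⟨f, Multiplicative.ofAdd i⟩ : Wr ℤ (DihedralGroup (2 * l)))} =
      {n' | ∃ L : List (Wr ℤ (DihedralGroup l)),
        (∀ x ∈ L, x ∈ swsSet k l) ∧ L.length = n' ∧
          L.prod = (⟨fun x => π (f x), Multiplicative.ofAdd i⟩ : Wr ℤ (DihedralGroup l))} := by
    ext n'
    simp only [Set.mem_setOf_eq]
    constructor
    · rintro ⟨L, hmem, rfl, hprod⟩
      obtain ⟨cs, rfl⟩ := S16aux.exists_cs k (2 * l) L hmem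
      rw [S16aux.prodW] at hprod
      have hleft : (fun x => S16aux.lampAt k (2 * l) x cs) = f :=
        congrArg SemidirectProduct.left hprod
      have hright : Multiplicative.ofAdd (S16aux.sumD cs) = Multiplicative.ofAdd i :=
        congrArg SemidirectProduct.right hprod
      refine ⟨cs.map (S16aux.ltW k l), fun x hx => ?_, by simp, ?_⟩
      · obtain ⟨c, _, rfl⟩ := List.mem_map.mp hx
        exact S16aux.ltW_mem k l c
      · rw [S16aux.prodW]
        refine SemidirectProduct.ext ?_ hright
        funext x
        show S16aux.lampAt k l x cs = π (f x)
        rw [← S16aux.pi_lamp π hπa hπb k x cs]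
        exact congrArg π (congrFun hleft x)
    · rintro ⟨L, hmem, rfl, hprod⟩
      obtain ⟨cs, rfl⟩ := S16aux.exists_cs k l L hmem
      rw [S16aux.prodW] at hprod
      have hleft : (fun x => S16aux.lampAt k l x cs) = (fun x => π (f x)) :=
        congrArg SemidirectProduct.left hprod
      have hright : Multiplicative.ofAdd (S16aux.sumD cs) = Multiplicative.ofAdd i :=
        congrArg SemidirectProduct.right hprod
      have hπc : ∀ x : ℤ, π (S16aux.lampAt k (2 * l) x cs) = π (f x) := by
        intro x
        rw [S16aux.pi_lamp π hπa hπb]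
        exact congrFun hleft x
      have hfin : {x : ℤ | S16aux.lampAt k (2 * l) x cs ≠ f x}.Finite := by
        apply Set.Finite.subset ((S16aux.tokens_finite k cs).union hf)
        intro x hx
        by_contra hnx
        simp only [Set.mem_union, Set.mem_setOf_eq] at hnx
        push_neg at hnx
        apply hx
        show S16aux.lampAt k (2 * l) x cs = f x
        rw [S16aux.lampAt_eq, hnx.1, hnx.2]
        rfl
      obtain ⟨cs', g1, g2, g3⟩ := S16aux.fixAll hl π hπa hπb k f hbound hfin.toFinset cs
        (fun x hx => hfin.mem_toFinset.mpr hx) hπc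
      refine ⟨cs'.map (S16aux.ltW k (2 * l)), fun x hx => ?_, by simp [g1], ?_⟩
      · obtain ⟨c, _, rfl⟩ := List.mem_map.mp hx
        exact S16aux.ltW_mem k (2 * l) c
      · rw [S16aux.prodW]
        refine SemidirectProduct.ext (funext fun x => ?_) ?_
        · exact g3 x
        rw [show S16aux.sumD cs' = S16aux.sumD cs from congrArg List.sum g2]
        exact hright
  unfold lengthWrt
  exact congrArg sInf hset
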